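/- The φ-genus is subadditive under direct sum: for any α-pairings p₁, p₂, σ_φ(p₁) + σ_φ(p₂) ≥ σ_φ(p₁ ⊕ p₂). -/

import Mathlib

open scoped Classical

/-! α-pairings following Turaev: a finite set `S = S° ⊔ {s}` (here `S° = carrier`
and `s = none` in `Option carrier`), a projection `S° → α` and a pairing
`e : S × S → π` with values in a left `R`-module `π`. -/

/-- An `α`-pairing with values in the left `R`-module `π`. -/
structure APairing (α R π : Type) [Ring R] [AddCommGroup π] [Module R π] where
  /-- the set `S° = S ∖ {s}` -/
  carrier : Type
  [fintype : Fintype carrier]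
  /-- the projection `S° → α` -/
  proj : carrier → α
  /-- the pairing `e : S × S → π`, where `none` plays the role of `s` -/
  pair : Option carrier → Option carrier → π

attribute [instance] APairing.fintype

namespace APairing

variable {α R π : Type} [Ring R] [AddCommGroup π] [Module R π]

/-- The free `R`-module `RS` on `S`. -/
abbrev Vec (p : APairing α R π) : Type := Option p.carrier →₀ R

/-- The bilinear extension `ẽ : RS × RS → π` of the pairing. -/
def ext (p : APairing α R π) (x y : p.Vec) : π :=
  x.sum fun i r => y.sum fun j s => (r * s) • p.pair i j

/-- A short vector: an element `A ∈ S°`, or `A + B` with `|A| = |B|`, or `A - B`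
with `|A| = τ(|B|)` (with `A ≠ B` in the latter two cases). -/
def Short (τ : α → α) (p : APairing α R π) (x : p.Vec) : Prop :=
  (∃ A : p.carrier, x = Finsupp.single (some A) 1) ∨
  (∃ A B : p.carrier, A ≠ B ∧ p.proj A = p.proj B ∧
      x = Finsupp.single (some A) 1 + Finsupp.single (some B) 1) ∨
  (∃ A B : p.carrier, A ≠ B ∧ p.proj A = τ (p.proj B) ∧
      x = Finsupp.single (some A) 1 - Finsupp.single (some B) 1)

/-- A filling of `p`: a finite family of vectors, one equal to `s`, the others
short, such that every element of `S°` occurs with nonzero coefficient in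
exactly one of them. -/
def IsFilling (τ : α → α) (p : APairing α R π) (F : Finset p.Vec) : Prop :=
  Finsupp.single none (1 : R) ∈ F ∧
  (∀ x ∈ F, x ≠ Finsupp.single none (1 : R) → Short τ p x) ∧
  ∀ A : p.carrier, ∃! x, x ∈ F ∧ x (some A) ≠ 0

/-- The filling is annihilating: `ẽ(λᵢ, λⱼ) = 0` for all `i, j`. -/
def IsAnnihilating (p : APairing α R π) (F : Finset p.Vec) : Prop :=
  ∀ x ∈ F, ∀ y ∈ F, p.ext x y = 0

/-- A hyperbolic `α`-pairing: one possessing an annihilating filling. -/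
def Hyperbolic (τ : α → α) (p : APairing α R π) : Prop :=
  ∃ F : Finset p.Vec, IsFilling τ p F ∧ IsAnnihilating p F

/-- The opposite `α`-pairing `p⁻`, with pairing `-e`. -/
def opp (p : APairing α R π) : APairing α R π where
  carrier := p.carrier
  proj := p.proj
  pair i j := - p.pair i j

instance (p : APairing α R π) : Fintype p.opp.carrier :=
  inferInstanceAs (Fintype p.carrier)

/-- The sum `p ⊕ q` of `α`-pairings: `S° = S°₁ ⊔ S°₂` with `s ↦ s₁ + s₂`. -/
def dsum (p q : APairing α R π) : APairing α R π where
  carrier := p.carrier ⊕ q.carrier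
  proj := Sum.elim p.proj q.proj
  pair i j :=
    match i, j with
    | none, none => p.pair none none + q.pair none none
    | none, some (Sum.inl B) => p.pair none (some B)
    | none, some (Sum.inr B) => q.pair none (some B)
    | some (Sum.inl A), none => p.pair (some A) none
    | some (Sum.inr A), none => q.pair (some A) none
    | some (Sum.inl A), some (Sum.inl B) => p.pair (some A) (some B)
    | some (Sum.inr A), some (Sum.inr B) => q.pair (some A) (some B)
    | some (Sum.inl _), some (Sum.inr _) => 0
    | some (Sum.inr _), some (Sum.inl _) => 0

/-- Two `α`-pairings are cobordant if `p ⊕ q⁻` is hyperbolic. -/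
def Cobordant (τ : α → α) (p q : APairing α R π) : Prop :=
  Hyperbolic τ (p.dsum q.opp)

end APairing

open APairing
open scoped ENNReal

variable {α R π F : Type} [Ring R] [AddCommGroup π] [Module R π]
  [CommRing F] [IsDomain F] [Module R F]

/-- The matrix `(φ ẽ(λᵢ, λⱼ))_{i,j}` of a filling, with entries in the quotient
field of `F` (ranks are computed over the quotient field). -/
noncomputable def fillMatrix (φ : π →ₗ[R] F) (p : APairing α R π)
    (Fl : Finset p.Vec) : Matrix Fl Fl (FractionRing F) :=
  Matrix.of fun x y : Fl => algebraMap F (FractionRing F) (φ (p.ext x y))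

/-- The `φ`-genus `σ_φ(p)`: the minimum over all fillings `λ` of `p` of half the
rank of the matrix `(φ ẽ(λᵢ, λⱼ))`. -/
noncomputable def phiGenus (τ : α → α) (φ : π →ₗ[R] F) (p : APairing α R π) : ℝ≥0∞ :=
  ⨅ Fl : {Fl : Finset p.Vec // IsFilling τ p Fl},
    ((Matrix.rank (fillMatrix φ p Fl.1) : ℝ≥0∞) / 2)


/-! ### Auxiliary material for the proof of subadditivity -/

section AuxExt

variable {α R π : Type} [Ring R] [AddCommGroup π] [Module R π]

namespace APairing

lemma ext_zero_left (p : APairing α R π) (y : p.Vec) : p.ext 0 y = 0 := by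
  simp [ext]

lemma ext_zero_right (p : APairing α R π) (x : p.Vec) : p.ext x 0 = 0 := by
  simp [ext]

lemma ext_add_left (p : APairing α R π) (x x' y : p.Vec) :
    p.ext (x + x') y = p.ext x y + p.ext x' y := by
  unfold ext
  apply Finsupp.sum_add_index'
  · intro i; simp
  · intro i r r'
    rw [← Finsupp.sum_add]
    congr 1; funext j s
    rw [add_mul, add_smul]

lemma ext_add_right (p : APairing α R π) (x y y' : p.Vec) :
    p.ext x (y + y') = p.ext x y + p.ext x y' := by
  unfold ext
  rw [← Finsupp.sum_add]
  congr 1; funext i r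
  apply Finsupp.sum_add_index'
  · intro j; simp
  · intro j s s'
    rw [mul_add, add_smul]

lemma ext_single_single (p : APairing α R π) (i j : Option p.carrier) (r s : R) :
    p.ext (Finsupp.single i r) (Finsupp.single j s) = (r * s) • p.pair i j := by
  unfold ext
  rw [Finsupp.sum_single_index (by simp), Finsupp.sum_single_index (by simp)]

variable (p₁ p₂ : APairing α R π)

/-- The embedding `Option S°₁ ↪ Option (S°₁ ⊕ S°₂)`. -/
def inlEmb : Option p₁.carrier ↪ Option (p₁.dsum p₂).carrier :=
  ⟨Option.map Sum.inl, Option.map_injective Sum.inl_injective⟩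

/-- The embedding `Option S°₂ ↪ Option (S°₁ ⊕ S°₂)`. -/
def inrEmb : Option p₂.carrier ↪ Option (p₁.dsum p₂).carrier :=
  ⟨Option.map Sum.inr, Option.map_injective Sum.inr_injective⟩

/-- Embedding of vectors for `p₁` into vectors for `p₁ ⊕ p₂`. -/
noncomputable def emb₁ : p₁.Vec → (p₁.dsum p₂).Vec := fun a => Finsupp.embDomain (inlEmb p₁ p₂) a

/-- Embedding of vectors for `p₂` into vectors for `p₁ ⊕ p₂`. -/
noncomputable def emb₂ : p₂.Vec → (p₁.dsum p₂).Vec := fun c => Finsupp.embDomain (inrEmb p₁ p₂) c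

/-- Restriction of a vector for `p₁ ⊕ p₂` to a vector for `p₁`. -/
noncomputable def res₁ : (p₁.dsum p₂).Vec → p₁.Vec := fun x =>
  Finsupp.comapDomain (Option.map Sum.inl) x
    ((Option.map_injective Sum.inl_injective).injOn)

/-- Restriction of a vector for `p₁ ⊕ p₂` to a vector for `p₂`. -/
noncomputable def res₂ : (p₁.dsum p₂).Vec → p₂.Vec := fun x =>
  Finsupp.comapDomain (Option.map Sum.inr) x
    ((Option.map_injective Sum.inr_injective).injOn)

lemma res₁_apply (x : (p₁.dsum p₂).Vec) (i : Option p₁.carrier) :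
    res₁ p₁ p₂ x i = x (Option.map Sum.inl i) := rfl

lemma res₂_apply (x : (p₁.dsum p₂).Vec) (i : Option p₂.carrier) :
    res₂ p₁ p₂ x i = x (Option.map Sum.inr i) := rfl

lemma res₁_zero : res₁ p₁ p₂ 0 = 0 := by
  ext i; simp [res₁_apply]

lemma res₂_zero : res₂ p₁ p₂ 0 = 0 := by
  ext i; simp [res₂_apply]

lemma res₁_add (x y : (p₁.dsum p₂).Vec) :
    res₁ p₁ p₂ (x + y) = res₁ p₁ p₂ x + res₁ p₁ p₂ y := by
  ext i; simp [res₁_apply]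

lemma res₂_add (x y : (p₁.dsum p₂).Vec) :
    res₂ p₁ p₂ (x + y) = res₂ p₁ p₂ x + res₂ p₁ p₂ y := by
  ext i; simp [res₂_apply]

lemma res₁_single_none (r : R) :
    res₁ p₁ p₂ (Finsupp.single none r) = Finsupp.single none r := by
  ext i
  rw [res₁_apply]
  cases i <;> simp [Finsupp.single_apply, Sum.inl.injEq, Sum.inr.injEq]
  · intro h; exact (h rfl).elim
  · intro h; cases h

lemma res₂_single_none (r : R) :
    res₂ p₁ p₂ (Finsupp.single none r) = Finsupp.single none r := by
  ext i
  rw [res₂_apply]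
  cases i <;> simp [Finsupp.single_apply, Sum.inl.injEq, Sum.inr.injEq]
  · intro h; exact (h rfl).elim
  · intro h; cases h

lemma res₁_single_inl (A : p₁.carrier) (r : R) :
    res₁ p₁ p₂ (Finsupp.single (some (Sum.inl A)) r) = Finsupp.single (some A) r := by
  ext i
  rw [res₁_apply]
  exact Finsupp.single_apply_left (Option.map_injective Sum.inl_injective) (some A) i r

lemma res₂_single_inr (A : p₂.carrier) (r : R) :
    res₂ p₁ p₂ (Finsupp.single (some (Sum.inr A)) r) = Finsupp.single (some A) r := by
  ext i
  rw [res₂_apply]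
  exact Finsupp.single_apply_left (Option.map_injective Sum.inr_injective) (some A) i r

lemma res₁_single_inr (A : p₂.carrier) (r : R) :
    res₁ p₁ p₂ (Finsupp.single (some (Sum.inr A)) r) = 0 := by
  ext i
  rw [res₁_apply]
  cases i <;> simp [Finsupp.single_apply, Sum.inl.injEq, Sum.inr.injEq] <;> intro h <;> cases h

lemma res₂_single_inl (A : p₁.carrier) (r : R) :
    res₂ p₁ p₂ (Finsupp.single (some (Sum.inl A)) r) = 0 := by
  ext i
  rw [res₂_apply]
  cases i <;> simp [Finsupp.single_apply, Sum.inl.injEq, Sum.inr.injEq] <;> intro h <;> cases h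

/-- The master identity: the pairing on the direct sum decomposes through the two
restrictions. -/
lemma ext_dsum_eq (x y : (p₁.dsum p₂).Vec) :
    (p₁.dsum p₂).ext x y =
      p₁.ext (res₁ p₁ p₂ x) (res₁ p₁ p₂ y) + p₂.ext (res₂ p₁ p₂ x) (res₂ p₁ p₂ y) := by
  induction x using Finsupp.induction_linear with
  | zero => simp [res₁_zero, res₂_zero, ext_zero_left]
  | add f g hf hg =>
      rw [ext_add_left, res₁_add, res₂_add, ext_add_left, ext_add_left, hf, hg]
      abel
  | single i r =>
    induction y using Finsupp.induction_linear with
    | zero => simp [res₁_zero, res₂_zero, ext_zero_right]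
    | add f g hf hg =>
        rw [ext_add_right, res₁_add, res₂_add, ext_add_right, ext_add_right, hf, hg]
        abel
    | single j s =>
        rw [ext_single_single]
        obtain _ | (A | A) := i <;> obtain _ | (B | B) := j
        · rw [show (p₁.dsum p₂).pair none none
              = p₁.pair none none + p₂.pair none none from rfl,
            res₁_single_none, res₂_single_none, res₁_single_none, res₂_single_none,
            ext_single_single, ext_single_single, smul_add]
        · rw [show (p₁.dsum p₂).pair none (some (Sum.inl B))
              = p₁.pair none (some B) from rfl,
            res₁_single_none, res₂_single_none, res₁_single_inl, res₂_single_inl,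
            ext_single_single, ext_zero_right, add_zero]
        · rw [show (p₁.dsum p₂).pair none (some (Sum.inr B))
              = p₂.pair none (some B) from rfl,
            res₁_single_none, res₂_single_none, res₁_single_inr, res₂_single_inr,
            ext_single_single, ext_zero_right, zero_add]
        · rw [show (p₁.dsum p₂).pair (some (Sum.inl A)) none
              = p₁.pair (some A) none from rfl,
            res₁_single_inl, res₂_single_inl, res₁_single_none, res₂_single_none,
            ext_single_single, ext_zero_left, add_zero]
        · rw [show (p₁.dsum p₂).pair (some (Sum.inl A)) (some (Sum.inl B))
              = p₁.pair (some A) (some B) from rfl,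
            res₁_single_inl, res₂_single_inl, res₁_single_inl, res₂_single_inl,
            ext_single_single, ext_zero_left, add_zero]
        · rw [show (p₁.dsum p₂).pair (some (Sum.inl A)) (some (Sum.inr B))
              = (0 : π) from rfl,
            res₁_single_inl, res₂_single_inl, res₁_single_inr, res₂_single_inr,
            ext_zero_right, ext_zero_left, add_zero, smul_zero]
        · rw [show (p₁.dsum p₂).pair (some (Sum.inr A)) none
              = p₂.pair (some A) none from rfl,
            res₁_single_inr, res₂_single_inr, res₁_single_none, res₂_single_none,
            ext_single_single, ext_zero_left, zero_add]
        · rw [show (p₁.dsum p₂).pair (some (Sum.inr A)) (some (Sum.inl B))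
              = (0 : π) from rfl,
            res₁_single_inr, res₂_single_inr, res₁_single_inl, res₂_single_inl,
            ext_zero_left, ext_zero_right, add_zero, smul_zero]
        · rw [show (p₁.dsum p₂).pair (some (Sum.inr A)) (some (Sum.inr B))
              = p₂.pair (some A) (some B) from rfl,
            res₁_single_inr, res₂_single_inr, res₁_single_inr, res₂_single_inr,
            ext_single_single, ext_zero_left, zero_add]

lemma res₁_emb₁ (a : p₁.Vec) : res₁ p₁ p₂ (emb₁ p₁ p₂ a) = a := by
  ext i
  rw [res₁_apply]
  exact Finsupp.embDomain_apply_self (inlEmb p₁ p₂) a i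

lemma res₂_emb₂ (c : p₂.Vec) : res₂ p₁ p₂ (emb₂ p₁ p₂ c) = c := by
  ext i
  rw [res₂_apply]
  exact Finsupp.embDomain_apply_self (inrEmb p₁ p₂) c i

lemma emb₂_not_range_inl (A : p₁.carrier) :
    (some (Sum.inl A) : Option (p₁.dsum p₂).carrier) ∉ Set.range (inrEmb p₁ p₂) := by
  rintro ⟨j, hj⟩
  cases j <;> simp [inrEmb] at hj <;> cases hj

lemma emb₁_not_range_inr (A : p₂.carrier) :
    (some (Sum.inr A) : Option (p₁.dsum p₂).carrier) ∉ Set.range (inlEmb p₁ p₂) := by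
  rintro ⟨j, hj⟩
  cases j <;> simp [inlEmb] at hj <;> cases hj

lemma res₁_emb₂ (c : p₂.Vec) :
    res₁ p₁ p₂ (emb₂ p₁ p₂ c) = Finsupp.single none (c none) := by
  ext i
  rw [res₁_apply]
  cases i with
  | none =>
      have h : (Option.map Sum.inl (none : Option p₁.carrier)) =
          (inrEmb p₁ p₂) (none : Option p₂.carrier) := rfl
      rw [emb₂]
      exact (Finsupp.embDomain_apply_self (inrEmb p₁ p₂) c none).trans (by simp)
  | some A =>
      rw [emb₂]
      exact (Finsupp.embDomain_notin_range _ _ _ (emb₂_not_range_inl p₁ p₂ A)).trans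
        (by simp [Finsupp.single_apply])

lemma res₂_emb₁ (a : p₁.Vec) :
    res₂ p₁ p₂ (emb₁ p₁ p₂ a) = Finsupp.single none (a none) := by
  ext i
  rw [res₂_apply]
  cases i with
  | none =>
      have h : (Option.map Sum.inr (none : Option p₂.carrier)) =
          (inlEmb p₁ p₂) (none : Option p₁.carrier) := rfl
      rw [emb₁]
      exact (Finsupp.embDomain_apply_self (inlEmb p₁ p₂) a none).trans (by simp)
  | some A =>
      rw [emb₁]
      exact (Finsupp.embDomain_notin_range _ _ _ (emb₁_not_range_inr p₁ p₂ A)).trans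
        (by simp [Finsupp.single_apply])

lemma emb₁_s : emb₁ p₁ p₂ (Finsupp.single none 1) = Finsupp.single none (1 : R) := by
  rw [emb₁, Finsupp.embDomain_single]
  rfl

lemma emb₂_s : emb₂ p₁ p₂ (Finsupp.single none 1) = Finsupp.single none (1 : R) := by
  rw [emb₂, Finsupp.embDomain_single]
  rfl

lemma emb₁_apply_inl (a : p₁.Vec) (A : p₁.carrier) :
    emb₁ p₁ p₂ a (some (Sum.inl A)) = a (some A) :=
  Finsupp.embDomain_apply_self (inlEmb p₁ p₂) a (some A)

lemma emb₂_apply_inr (c : p₂.Vec) (A : p₂.carrier) :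
    emb₂ p₁ p₂ c (some (Sum.inr A)) = c (some A) :=
  Finsupp.embDomain_apply_self (inrEmb p₁ p₂) c (some A)

lemma embDomain_sub {γ δ : Type} (f : γ ↪ δ) (a b : γ →₀ R) :
    Finsupp.embDomain f (a - b) = Finsupp.embDomain f a - Finsupp.embDomain f b := by
  simpa using map_sub (Finsupp.embDomain.addMonoidHom (M := R) f) a b

lemma short_apply_none {τ : α → α} {p : APairing α R π} {x : p.Vec}
    (h : Short τ p x) : x none = 0 := by
  rcases h with ⟨A, rfl⟩ | ⟨A, B, _, _, rfl⟩ | ⟨A, B, _, _, rfl⟩ <;>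
    simp [Finsupp.single_apply]

lemma short_emb₁ {τ : α → α} {a : p₁.Vec} (h : Short τ p₁ a) :
    Short τ (p₁.dsum p₂) (emb₁ p₁ p₂ a) := by
  rcases h with ⟨A, rfl⟩ | ⟨A, B, hAB, hproj, rfl⟩ | ⟨A, B, hAB, hproj, rfl⟩
  · left
    exact ⟨Sum.inl A, by rw [emb₁, Finsupp.embDomain_single]; rfl⟩
  · right; left
    refine ⟨Sum.inl A, Sum.inl B, fun h => hAB (Sum.inl_injective h), ?_, ?_⟩
    · show Sum.elim p₁.proj p₂.proj (Sum.inl A) = Sum.elim p₁.proj p₂.proj (Sum.inl B)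
      simpa using hproj
    · rw [emb₁, Finsupp.embDomain_add, Finsupp.embDomain_single, Finsupp.embDomain_single]
      rfl
  · right; right
    refine ⟨Sum.inl A, Sum.inl B, fun h => hAB (Sum.inl_injective h), ?_, ?_⟩
    · show Sum.elim p₁.proj p₂.proj (Sum.inl A) = τ (Sum.elim p₁.proj p₂.proj (Sum.inl B))
      simpa using hproj
    · rw [emb₁, embDomain_sub, Finsupp.embDomain_single, Finsupp.embDomain_single]
      rfl

lemma short_emb₂ {τ : α → α} {c : p₂.Vec} (h : Short τ p₂ c) :
    Short τ (p₁.dsum p₂) (emb₂ p₁ p₂ c) := by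
  rcases h with ⟨A, rfl⟩ | ⟨A, B, hAB, hproj, rfl⟩ | ⟨A, B, hAB, hproj, rfl⟩
  · left
    exact ⟨Sum.inr A, by rw [emb₂, Finsupp.embDomain_single]; rfl⟩
  · right; left
    refine ⟨Sum.inr A, Sum.inr B, fun h => hAB (Sum.inr_injective h), ?_, ?_⟩
    · show Sum.elim p₁.proj p₂.proj (Sum.inr A) = Sum.elim p₁.proj p₂.proj (Sum.inr B)
      simpa using hproj
    · rw [emb₂, Finsupp.embDomain_add, Finsupp.embDomain_single, Finsupp.embDomain_single]
      rfl
  · right; right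
    refine ⟨Sum.inr A, Sum.inr B, fun h => hAB (Sum.inr_injective h), ?_, ?_⟩
    · show Sum.elim p₁.proj p₂.proj (Sum.inr A) = τ (Sum.elim p₁.proj p₂.proj (Sum.inr B))
      simpa using hproj
    · rw [emb₂, embDomain_sub, Finsupp.embDomain_single, Finsupp.embDomain_single]
      rfl

/-- The union of the two embedded fillings is a filling of the direct sum. -/
theorem isFilling_union (τ : α → α) {L₁ : Finset p₁.Vec}
    {L₂ : Finset p₂.Vec} (hF₁ : IsFilling τ p₁ L₁) (hF₂ : IsFilling τ p₂ L₂) :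
    IsFilling τ (p₁.dsum p₂)
      (L₁.image (emb₁ p₁ p₂) ∪ L₂.image (emb₂ p₁ p₂)) := by
  classical
  refine ⟨?_, ?_, ?_⟩
  · refine Finset.mem_union_left _ ?_
    rw [← emb₁_s p₁ p₂]
    exact Finset.mem_image_of_mem _ hF₁.1
  · intro x hx hxs
    rcases Finset.mem_union.1 hx with h | h
    · obtain ⟨a, ha, rfl⟩ := Finset.mem_image.1 h
      have hane : a ≠ Finsupp.single none 1 := by
        rintro rfl; exact hxs (emb₁_s p₁ p₂)
      exact short_emb₁ p₁ p₂ (hF₁.2.1 a ha hane)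
    · obtain ⟨c, hc, rfl⟩ := Finset.mem_image.1 h
      have hcne : c ≠ Finsupp.single none 1 := by
        rintro rfl; exact hxs (emb₂_s p₁ p₂)
      exact short_emb₂ p₁ p₂ (hF₂.2.1 c hc hcne)
  · intro A
    obtain A | A := A
    · obtain ⟨a, ⟨haL, haA⟩, hu⟩ := hF₁.2.2 A
      refine ⟨emb₁ p₁ p₂ a,
        ⟨Finset.mem_union_left _ (Finset.mem_image_of_mem _ haL), ?_⟩, ?_⟩
      · rw [emb₁_apply_inl]; exact haA
      · rintro y ⟨hy, hyA⟩
        rcases Finset.mem_union.1 hy with h | h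
        · obtain ⟨b, hb, rfl⟩ := Finset.mem_image.1 h
          rw [emb₁_apply_inl] at hyA
          exact congrArg _ (hu b ⟨hb, hyA⟩)
        · obtain ⟨c, hc, rfl⟩ := Finset.mem_image.1 h
          exact absurd (Finsupp.embDomain_notin_range _ _ _
            (emb₂_not_range_inl p₁ p₂ A)) hyA
    · obtain ⟨a, ⟨haL, haA⟩, hu⟩ := hF₂.2.2 A
      refine ⟨emb₂ p₁ p₂ a,
        ⟨Finset.mem_union_right _ (Finset.mem_image_of_mem _ haL), ?_⟩, ?_⟩
      · rw [emb₂_apply_inr]; exact haA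
      · rintro y ⟨hy, hyA⟩
        rcases Finset.mem_union.1 hy with h | h
        · obtain ⟨b, hb, rfl⟩ := Finset.mem_image.1 h
          exact absurd (Finsupp.embDomain_notin_range _ _ _
            (emb₁_not_range_inr p₁ p₂ A)) hyA
        · obtain ⟨c, hc, rfl⟩ := Finset.mem_image.1 h
          rw [emb₂_apply_inr] at hyA
          exact congrArg _ (hu c ⟨hc, hyA⟩)

end APairing

end AuxExt

section AuxRank

open APairing

/-- Subadditivity of matrix rank over a field. -/
lemma matrix_rank_add_le {K : Type*} [Field K] {m n : Type} [Fintype m] [Fintype n]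
    (A B : Matrix m n K) : (A + B).rank ≤ A.rank + B.rank := by
  classical
  rw [Matrix.rank, Matrix.rank, Matrix.rank, Matrix.mulVecLin_add]
  have h : LinearMap.range (A.mulVecLin + B.mulVecLin) ≤
      LinearMap.range A.mulVecLin ⊔ LinearMap.range B.mulVecLin := by
    rintro _ ⟨v, rfl⟩
    exact Submodule.mem_sup.2 ⟨A.mulVecLin v, ⟨v, rfl⟩, B.mulVecLin v, ⟨v, rfl⟩, rfl⟩
  exact le_trans (Submodule.finrank_mono h)
    (Submodule.finrank_add_le_finrank_add_finrank _ _)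

/-- A matrix of the form `d x * M (g x) (g y) * d y` has rank at most that of `M`. -/
lemma matrix_rank_pull_le {K : Type*} [Field K] {ι κ : Type} [Fintype ι] [Fintype κ]
    (M : Matrix κ κ K) (g : ι → κ) (d : ι → K) :
    (Matrix.of fun x y : ι => d x * M (g x) (g y) * d y).rank ≤ M.rank := by
  classical
  have hfac : (Matrix.of fun x y : ι => d x * M (g x) (g y) * d y) =
      (Matrix.of fun (x : ι) (i : κ) => if g x = i then d x else 0) * M *
        (Matrix.of fun (i : κ) (y : ι) => if g y = i then d y else 0) := by
    ext x y
    simp [Matrix.mul_apply, ite_mul, mul_ite, zero_mul, mul_zero,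
      Finset.sum_ite_eq, Finset.mul_sum, Finset.sum_mul]
  rw [hfac]
  exact le_trans (Matrix.rank_mul_le_left _ _) (Matrix.rank_mul_le_right _ _)

variable {α R π F : Type} [Ring R] [AddCommGroup π] [Module R π]
  [CommRing F] [IsDomain F] [Module R F]

/-- The rank of the filling matrix of the union filling is at most the sum of
the ranks of the two filling matrices. -/
lemma fillMatrix_union_rank_le (τ : α → α) (φ : π →ₗ[R] F)
    (p₁ p₂ : APairing α R π) {L₁ : Finset p₁.Vec} {L₂ : Finset p₂.Vec}
    (hF₁ : IsFilling τ p₁ L₁) (hF₂ : IsFilling τ p₂ L₂) :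
    (fillMatrix φ (p₁.dsum p₂)
        (L₁.image (emb₁ p₁ p₂) ∪ L₂.image (emb₂ p₁ p₂))).rank ≤
      (fillMatrix φ p₁ L₁).rank + (fillMatrix φ p₂ L₂).rank := by
  classical
  set K := FractionRing F
  set L : Finset (p₁.dsum p₂).Vec := L₁.image (emb₁ p₁ p₂) ∪ L₂.image (emb₂ p₁ p₂) with hL
  -- restrictions of members of `L` either lie in the original filling or vanish
  have hres₁ : ∀ x ∈ L, res₁ p₁ p₂ x ∈ L₁ ∨ res₁ p₁ p₂ x = 0 := by
    intro x hx
    rcases Finset.mem_union.1 hx with h | h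
    · obtain ⟨a, ha, rfl⟩ := Finset.mem_image.1 h
      rw [res₁_emb₁]; exact Or.inl ha
    · obtain ⟨c, hc, rfl⟩ := Finset.mem_image.1 h
      rw [res₁_emb₂]
      by_cases hcs : c = Finsupp.single none 1
      · subst hcs; left
        rw [Finsupp.single_eq_same]
        exact hF₁.1
      · right
        rw [short_apply_none (hF₂.2.1 c hc hcs), Finsupp.single_zero]
  have hres₂ : ∀ x ∈ L, res₂ p₁ p₂ x ∈ L₂ ∨ res₂ p₁ p₂ x = 0 := by
    intro x hx
    rcases Finset.mem_union.1 hx with h | h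
    · obtain ⟨a, ha, rfl⟩ := Finset.mem_image.1 h
      rw [res₂_emb₁]
      by_cases hcs : a = Finsupp.single none 1
      · subst hcs; left
        rw [Finsupp.single_eq_same]
        exact hF₂.1
      · right
        rw [short_apply_none (hF₁.2.1 a ha hcs), Finsupp.single_zero]
    · obtain ⟨c, hc, rfl⟩ := Finset.mem_image.1 h
      rw [res₂_emb₂]; exact Or.inl hc
  -- the scalar / index data
  let g₁ : L → L₁ := fun x =>
    if h : res₁ p₁ p₂ (x : (p₁.dsum p₂).Vec) ∈ L₁ then ⟨_, h⟩ else ⟨_, hF₁.1⟩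
  let d₁ : L → K := fun x =>
    if res₁ p₁ p₂ (x : (p₁.dsum p₂).Vec) ∈ L₁ then 1 else 0
  let g₂ : L → L₂ := fun x =>
    if h : res₂ p₁ p₂ (x : (p₁.dsum p₂).Vec) ∈ L₂ then ⟨_, h⟩ else ⟨_, hF₂.1⟩
  let d₂ : L → K := fun x =>
    if res₂ p₁ p₂ (x : (p₁.dsum p₂).Vec) ∈ L₂ then 1 else 0
  have hsplit : fillMatrix φ (p₁.dsum p₂) L =
      (Matrix.of fun x y : L =>
        d₁ x * (fillMatrix φ p₁ L₁) (g₁ x) (g₁ y) * d₁ y) +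
      (Matrix.of fun x y : L =>
        d₂ x * (fillMatrix φ p₂ L₂) (g₂ x) (g₂ y) * d₂ y) := by
    ext x y
    show (algebraMap F K) (φ ((p₁.dsum p₂).ext (x : (p₁.dsum p₂).Vec) y)) = _
    rw [ext_dsum_eq, map_add, map_add]
    congr 1
    · by_cases hx : res₁ p₁ p₂ (x : (p₁.dsum p₂).Vec) ∈ L₁ <;>
        by_cases hy : res₁ p₁ p₂ (y : (p₁.dsum p₂).Vec) ∈ L₁
      · simp [d₁, g₁, hx, hy, fillMatrix]; rfl
      · have h0 : res₁ p₁ p₂ (y : (p₁.dsum p₂).Vec) = 0 :=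
          (hres₁ _ y.2).resolve_left hy
        rw [h0] at hy
        simp [d₁, hx, hy, h0, ext_zero_right]
      · have h0 : res₁ p₁ p₂ (x : (p₁.dsum p₂).Vec) = 0 :=
          (hres₁ _ x.2).resolve_left hx
        rw [h0] at hx
        simp [d₁, hx, hy, h0, ext_zero_left]
      · have h0 : res₁ p₁ p₂ (x : (p₁.dsum p₂).Vec) = 0 :=
          (hres₁ _ x.2).resolve_left hx
        rw [h0] at hx
        simp [d₁, hx, hy, h0, ext_zero_left]
    · by_cases hx : res₂ p₁ p₂ (x : (p₁.dsum p₂).Vec) ∈ L₂ <;>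
        by_cases hy : res₂ p₁ p₂ (y : (p₁.dsum p₂).Vec) ∈ L₂
      · simp [d₂, g₂, hx, hy, fillMatrix]; rfl
      · have h0 : res₂ p₁ p₂ (y : (p₁.dsum p₂).Vec) = 0 :=
          (hres₂ _ y.2).resolve_left hy
        rw [h0] at hy
        simp [d₂, hx, hy, h0, ext_zero_right]
      · have h0 : res₂ p₁ p₂ (x : (p₁.dsum p₂).Vec) = 0 :=
          (hres₂ _ x.2).resolve_left hx
        rw [h0] at hx
        simp [d₂, hx, hy, h0, ext_zero_left]
      · have h0 : res₂ p₁ p₂ (x : (p₁.dsum p₂).Vec) = 0 :=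
          (hres₂ _ x.2).resolve_left hx
        rw [h0] at hx
        simp [d₂, hx, hy, h0, ext_zero_left]
  calc (fillMatrix φ (p₁.dsum p₂) L).rank
      ≤ (Matrix.of fun x y : L =>
          d₁ x * (fillMatrix φ p₁ L₁) (g₁ x) (g₁ y) * d₁ y).rank +
        (Matrix.of fun x y : L =>
          d₂ x * (fillMatrix φ p₂ L₂) (g₂ x) (g₂ y) * d₂ y).rank := by
        rw [hsplit]; exact matrix_rank_add_le _ _
    _ ≤ (fillMatrix φ p₁ L₁).rank + (fillMatrix φ p₂ L₂).rank :=
        add_le_add (matrix_rank_pull_le _ _ _) (matrix_rank_pull_le _ _ _)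

end AuxRank

/-- The `φ`-genus is subadditive:
`σ_φ(p₁) + σ_φ(p₂) ≥ σ_φ(p₁ ⊕ p₂)`. -/
theorem phiGenus_subadditive (τ : α → α) (φ : π →ₗ[R] F)
    (p₁ p₂ : APairing α R π) :
    phiGenus τ φ p₁ + phiGenus τ φ p₂ ≥ phiGenus τ φ (p₁.dsum p₂) := by
  rw [ge_iff_le]
  unfold phiGenus
  rw [ENNReal.iInf_add]
  refine le_iInf fun F1 => ?_
  rw [ENNReal.add_iInf]
  refine le_iInf fun F2 => ?_
  refine le_trans (iInf_le _ ⟨_, isFilling_union p₁ p₂ τ F1.2 F2.2⟩) ?_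
  have hrank := fillMatrix_union_rank_le τ φ p₁ p₂ F1.2 F2.2
  have hc : ((fillMatrix φ (p₁.dsum p₂)
      (F1.1.image (emb₁ p₁ p₂) ∪ F2.1.image (emb₂ p₁ p₂))).rank : ℝ≥0∞) ≤
      ((fillMatrix φ p₁ F1.1).rank : ℝ≥0∞) + ((fillMatrix φ p₂ F2.1).rank : ℝ≥0∞) := by
    exact_mod_cast hrank
  calc ((fillMatrix φ (p₁.dsum p₂)
        (F1.1.image (emb₁ p₁ p₂) ∪ F2.1.image (emb₂ p₁ p₂))).rank : ℝ≥0∞) / 2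
      ≤ (((fillMatrix φ p₁ F1.1).rank : ℝ≥0∞) +
          ((fillMatrix φ p₂ F2.1).rank : ℝ≥0∞)) / 2 := by gcongr
    _ = _ := ENNReal.add_div
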